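/- Let k, l, m ∈ ℕ with m ≥ 1, and let a_2 : (0,∞) → ℝ be twice continuously differentiable and satisfy r a_2″ + (2k+m+1) a_2′ + r a_2 = 0 on (0,∞). Define a_3(r) = −a_2′(r)/r and a_1(r) = ((2k+m) + (−1)^{l+1}(2l−m)) a_2(r) − r² a_3(r). Then the second equation of the radial system holds: a_2 + a_1′/r = (−1)^l(2l−m) a_3 on (0,∞). -/

import Mathlib

noncomputable section

open scoped BigOperators

/-- The `ℓ¹`-norm with respect to a Hamel basis.  On a finite-dimensional real
vector space (such as the Clifford algebra `ℝ_{0,m}`) the induced topology is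
the canonical one. -/
def hamelNorm (V : Type) [AddCommGroup V] [Module ℝ V] : AddGroupNorm V where
  toFun v := ∑ i ∈ ((Module.Basis.ofVectorSpace ℝ V).repr v).support,
      |(Module.Basis.ofVectorSpace ℝ V).repr v i|
  map_zero' := by simp
  add_le' := by
    intro x y
    classical
    set b := Module.Basis.ofVectorSpace ℝ V
    have hrepr : b.repr (x + y) = b.repr x + b.repr y := map_add _ _ _
    calc ∑ i ∈ (b.repr (x + y)).support, |b.repr (x + y) i|
        ≤ ∑ i ∈ (b.repr x).support ∪ (b.repr y).support, |b.repr (x + y) i| := by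
          refine Finset.sum_le_sum_of_subset_of_nonneg ?_ (fun i _ _ => abs_nonneg _)
          rw [hrepr]; exact Finsupp.support_add
      _ ≤ ∑ i ∈ (b.repr x).support ∪ (b.repr y).support, (|b.repr x i| + |b.repr y i|) := by
          refine Finset.sum_le_sum fun i _ => ?_
          rw [hrepr, Finsupp.add_apply]; exact abs_add_le _ _
      _ = (∑ i ∈ (b.repr x).support ∪ (b.repr y).support, |b.repr x i|)
            + ∑ i ∈ (b.repr x).support ∪ (b.repr y).support, |b.repr y i| :=
          Finset.sum_add_distrib
      _ = (∑ i ∈ (b.repr x).support, |b.repr x i|)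
            + ∑ i ∈ (b.repr y).support, |b.repr y i| := by
          rw [← Finset.sum_subset Finset.subset_union_left
              (fun i _ hi => by simp [Finsupp.notMem_support_iff.mp hi]),
            ← Finset.sum_subset Finset.subset_union_right
              (fun i _ hi => by simp [Finsupp.notMem_support_iff.mp hi])]
  neg' := by
    intro x
    simp [map_neg]
  eq_zero_of_map_eq_zero' := by
    classical
    intro x hx
    set b := Module.Basis.ofVectorSpace ℝ V
    have h0 : b.repr x = 0 := by
      ext i
      by_cases hi : i ∈ (b.repr x).support
      · exact abs_eq_zero.mp
          ((Finset.sum_eq_zero_iff_of_nonneg (fun i _ => abs_nonneg _)).mp hx i hi)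
      · simpa using Finsupp.notMem_support_iff.mp hi
    exact b.repr.map_eq_zero_iff.mp h0

/-- The quadratic form `Q(v) = -‖v‖²` on `ℝ^m`. -/
def Qneg (m : ℕ) : QuadraticForm ℝ (EuclideanSpace ℝ (Fin m)) :=
  (QuadraticMap.weightedSumSquares ℝ fun _ : Fin m => (-1 : ℝ)).comp
    (WithLp.linearEquiv 2 ℝ (Fin m → ℝ)).toLinearMap

/-- The real Clifford algebra `ℝ_{0,m}`. -/
abbrev Cl (m : ℕ) := CliffordAlgebra (Qneg m)

/-- The canonical embedding `ι : ℝ^m → ℝ_{0,m}`. -/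
abbrev ιC (m : ℕ) : EuclideanSpace ℝ (Fin m) →ₗ[ℝ] Cl m := CliffordAlgebra.ι (Qneg m)

/-- The generators `e₁, …, e_m` of `ℝ_{0,m}`. -/
def eC (m : ℕ) (j : Fin m) : Cl m := ιC m (EuclideanSpace.single j 1)

noncomputable instance (m : ℕ) : NormedAddCommGroup (Cl m) :=
  (hamelNorm (Cl m)).toNormedAddCommGroup

noncomputable instance (m : ℕ) : NormedSpace ℝ (Cl m) where
  norm_smul_le a v := by
    classical
    have hv : ‖v‖ = ∑ i ∈ ((Module.Basis.ofVectorSpace ℝ (Cl m)).repr v).support,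
        |(Module.Basis.ofVectorSpace ℝ (Cl m)).repr v i| := rfl
    have hav : ‖a • v‖ = ∑ i ∈ ((Module.Basis.ofVectorSpace ℝ (Cl m)).repr (a • v)).support,
        |(Module.Basis.ofVectorSpace ℝ (Cl m)).repr (a • v) i| := rfl
    set b := Module.Basis.ofVectorSpace ℝ (Cl m)
    have hrepr : b.repr (a • v) = a • b.repr v := map_smul _ _ _
    rw [hav, hv, Real.norm_eq_abs]
    calc ∑ i ∈ (b.repr (a • v)).support, |b.repr (a • v) i|
        ≤ ∑ i ∈ (b.repr v).support, |b.repr (a • v) i| := by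
          refine Finset.sum_le_sum_of_subset_of_nonneg ?_ (fun i _ _ => abs_nonneg _)
          rw [hrepr]; exact Finsupp.support_smul
      _ = ∑ i ∈ (b.repr v).support, |a| * |b.repr v i| := by
          refine Finset.sum_congr rfl fun i _ => ?_
          rw [hrepr, Finsupp.smul_apply, smul_eq_mul, abs_mul]
      _ = |a| * ∑ i ∈ (b.repr v).support, |b.repr v i| := by rw [Finset.mul_sum]

/-- The Dirac operator acting from the left: `∂_x f = Σⱼ eⱼ (∂_{xⱼ} f)`. -/
def diracL (m : ℕ) (f : EuclideanSpace ℝ (Fin m) → Cl m) (x : EuclideanSpace ℝ (Fin m)) : Cl m :=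
  ∑ j, eC m j * fderiv ℝ f x (EuclideanSpace.single j 1)

/-- The Dirac operator acting from the right: `f ∂_x = Σⱼ (∂_{xⱼ} f) eⱼ`. -/
def diracR (m : ℕ) (f : EuclideanSpace ℝ (Fin m) → Cl m) (x : EuclideanSpace ℝ (Fin m)) : Cl m :=
  ∑ j, fderiv ℝ f x (EuclideanSpace.single j 1) * eC m j


/-- If `a₂` solves the Bessel-type ODE, `a₃ := -a₂′/r` and
`a₁ := ((2k+m) + (-1)^{l+1}(2l-m)) a₂ - r² a₃`, then the second radial equation
`a₂ + a₁′/r = (-1)^l (2l - m) a₃` holds. -/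
theorem second_equation_of_bessel (k l m : ℕ) (hm : 1 ≤ m)
    (a₂ : ℝ → ℝ) (ha₂ : ContDiffOn ℝ 2 a₂ (Set.Ioi 0))
    (hode : ∀ r ∈ Set.Ioi (0 : ℝ),
      r * deriv (deriv a₂) r + (2 * (k : ℝ) + (m : ℝ) + 1) * deriv a₂ r + r * a₂ r = 0)
    (a₃ : ℝ → ℝ) (ha₃ : a₃ = fun r => -(deriv a₂ r / r))
    (a₁ : ℝ → ℝ) (ha₁ : a₁ = fun r =>
      ((2 * (k : ℝ) + (m : ℝ)) + (-1 : ℝ) ^ (l + 1) * (2 * (l : ℝ) - (m : ℝ))) * a₂ r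
        - r ^ 2 * a₃ r) :
    ∀ r ∈ Set.Ioi (0 : ℝ),
      a₂ r + deriv a₁ r / r = (-1 : ℝ) ^ l * (2 * (l : ℝ) - (m : ℝ)) * a₃ r := by
  intro r hr
  have hr0 : (0 : ℝ) < r := hr
  set C : ℝ := (2 * (k : ℝ) + (m : ℝ)) + (-1 : ℝ) ^ (l + 1) * (2 * (l : ℝ) - (m : ℝ)) with hC
  have hopen : IsOpen (Set.Ioi (0 : ℝ)) := isOpen_Ioi
  have hmem : Set.Ioi (0 : ℝ) ∈ nhds r := hopen.mem_nhds hr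
  have hca : ContDiffAt ℝ 2 a₂ r := ha₂.contDiffAt hmem
  have hd1 : HasDerivAt a₂ (deriv a₂ r) r :=
    (hca.differentiableAt (by norm_num)).hasDerivAt
  have hca' : ContDiffAt ℝ 1 (deriv a₂) r :=
    (ha₂.deriv_of_isOpen hopen (by norm_num)).contDiffAt hmem
  have hd2 : HasDerivAt (deriv a₂) (deriv (deriv a₂) r) r :=
    (hca'.differentiableAt (by norm_num)).hasDerivAt
  have heq : a₁ =ᶠ[nhds r] fun s => C * a₂ s + s * deriv a₂ s := by
    filter_upwards [hmem] with s hs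
    have hs0 : (s : ℝ) ≠ 0 := ne_of_gt hs
    rw [ha₁, ha₃]
    field_simp
    ring
  have hder : HasDerivAt (fun s => C * a₂ s + s * deriv a₂ s)
      (C * deriv a₂ r + (1 * deriv a₂ r + r * deriv (deriv a₂) r)) r :=
    (hd1.const_mul C).add ((hasDerivAt_id r).mul hd2)
  have hda₁ : deriv a₁ r = C * deriv a₂ r + (1 * deriv a₂ r + r * deriv (deriv a₂) r) := by
    rw [Filter.EventuallyEq.deriv_eq heq, hder.deriv]
  have hodr := hode r hr
  have hrne : (r : ℝ) ≠ 0 := ne_of_gt hr0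
  rw [hda₁, ha₃, hC]
  have hsign : (-1 : ℝ) ^ (l + 1) = -(-1 : ℝ) ^ l := by ring
  rw [hsign]
  field_simp
  linarith [hodr]

end
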